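/- Let (a,b) be a perplex parameter and define the perplex norm N(x) := (a₁b₂ − a₂b₁)x₁² + (a₁b₃ − a₃b₁)x₁x₂ − (a₁a₃ − a₂²)x₂² for x = (x₁,x₂) ∈ ℝ². Then N(x * y) = N(x)·N(y) for all x, y ∈ ℝ², and x is invertible for * (i.e., there exists y with x * y = 𝟙) if and only if N(x) ≠ 0. -/

import Mathlib

open Filter Topology

noncomputable section

/-- The perplex product on `ℝ²` determined by the parameters `a = (a₁,a₂,a₃)`,
`b = (b₁,b₂,b₃)`. -/
def pmul (a₁ a₂ a₃ b₁ b₂ b₃ : ℝ) (x y : ℝ × ℝ) : ℝ × ℝ :=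
  (a₁ * x.1 * y.1 + a₂ * (x.1 * y.2 + x.2 * y.1) + a₃ * x.2 * y.2,
   b₁ * x.1 * y.1 + b₂ * (x.1 * y.2 + x.2 * y.1) + b₃ * x.2 * y.2)

/-- `(a,b)` is a perplex parameter: conditions (i)-(iv). -/
def IsPerplexParam (a₁ a₂ a₃ b₁ b₂ b₃ : ℝ) : Prop :=
  a₁ * a₃ - a₂ ^ 2 ≠ 0 ∧ a₁ * b₂ - a₂ * b₁ ≠ 0 ∧
    a₂ * b₂ - a₃ * b₁ = 0 ∧ a₁ * a₃ - a₂ ^ 2 + a₂ * b₃ - a₃ * b₂ = 0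

/-- The multiplicative identity `𝟙` of the perplex algebra. -/
def pone (a₁ a₂ b₁ b₂ : ℝ) : ℝ × ℝ :=
  (1 / (a₁ * b₂ - a₂ * b₁)) • ((b₂, -b₁) : ℝ × ℝ)

/-- The perplex norm `N`. -/
def pN (a₁ a₂ a₃ b₁ b₂ b₃ : ℝ) (x : ℝ × ℝ) : ℝ :=
  (a₁ * b₂ - a₂ * b₁) * x.1 ^ 2 + (a₁ * b₃ - a₃ * b₁) * x.1 * x.2 -
    (a₁ * a₃ - a₂ ^ 2) * x.2 ^ 2

/-- The perplex norm is multiplicative, and `x` is invertible iff `N(x) ≠ 0`. -/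
theorem pN_mul_and_invertible_iff (a₁ a₂ a₃ b₁ b₂ b₃ : ℝ)
    (hp : IsPerplexParam a₁ a₂ a₃ b₁ b₂ b₃) :
    (∀ x y : ℝ × ℝ, pN a₁ a₂ a₃ b₁ b₂ b₃ (pmul a₁ a₂ a₃ b₁ b₂ b₃ x y) = pN a₁ a₂ a₃ b₁ b₂ b₃ x * pN a₁ a₂ a₃ b₁ b₂ b₃ y) ∧
      ∀ x : ℝ × ℝ, (∃ y : ℝ × ℝ, pmul a₁ a₂ a₃ b₁ b₂ b₃ x y = pone a₁ a₂ b₁ b₂) ↔ pN a₁ a₂ a₃ b₁ b₂ b₃ x ≠ 0 := by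
  obtain ⟨hD, hE, hp3, hp4⟩ := hp
  have h5 : b₂ ^ 2 - a₁ * b₂ + a₂ * b₁ - b₁ * b₃ = 0 := by
    by_cases h : a₂ = 0
    · subst h
      have ha3 : a₃ ≠ 0 := by
        intro h'
        exact hD (by rw [h']; ring)
      have hb1 : b₁ = 0 := by
        have h' : a₃ * b₁ = 0 := by linear_combination -hp3
        exact (mul_eq_zero.mp h').resolve_left ha3
      have hb2 : b₂ = a₁ := by
        have h' : a₃ * (a₁ - b₂) = 0 := by linear_combination hp4
        have := (mul_eq_zero.mp h').resolve_left ha3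
        linarith
      rw [hb1, hb2]; ring
    · have key : a₂ * (b₂ ^ 2 - a₁ * b₂ + a₂ * b₁ - b₁ * b₃) = 0 := by
        linear_combination (b₂ - a₁) * hp3 - b₁ * hp4
      exact (mul_eq_zero.mp key).resolve_left h
  have hmul : ∀ x y : ℝ × ℝ, pN a₁ a₂ a₃ b₁ b₂ b₃ (pmul a₁ a₂ a₃ b₁ b₂ b₃ x y) =
      pN a₁ a₂ a₃ b₁ b₂ b₃ x * pN a₁ a₂ a₃ b₁ b₂ b₃ y := by
    intro x y
    simp only [pN, pmul]
    linear_combination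
      (a₃*b₃*x.2^2*y.2^2 + a₃*b₂*(x.2^2*y.1*y.2 + x.1*x.2*y.2^2) + 2*a₃*b₁*x.1*x.2*y.1*y.2
        + a₂*b₃*(x.2^2*y.1*y.2 + x.1*x.2*y.2^2)
        + a₂*b₂*(x.2^2*y.1^2 + 4*x.1*x.2*y.1*y.2 + x.1^2*y.2^2)
        + 2*a₂*b₁*(x.1*x.2*y.1^2 + x.1^2*y.1*y.2) + a₂*a₃*x.2^2*y.2^2
        + a₂^2*(x.2^2*y.1*y.2 + x.1*x.2*y.2^2)
        + 2*a₁*b₂*(x.1*x.2*y.1^2 + x.1^2*y.1*y.2) + 2*a₁*b₁*x.1^2*y.1^2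
        + a₁*a₃*(x.2^2*y.1*y.2 + x.1*x.2*y.2^2)
        + a₁*a₂*(x.2^2*y.1^2 + 2*x.1*x.2*y.1*y.2 + x.1^2*y.2^2)) * hp3
      + (a₂*b₃*x.2^2*y.2^2 + a₂*b₂*(x.2^2*y.1*y.2 + x.1*x.2*y.2^2) + a₂^2*x.2^2*y.2^2
        + a₁*b₃*(x.2^2*y.1*y.2 + x.1*x.2*y.2^2)
        + a₁*b₂*(x.2^2*y.1^2 + 2*x.1*x.2*y.1*y.2 + x.1^2*y.2^2)
        - a₁*a₃*x.2^2*y.2^2) * hp4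
      + (a₂^2*(x.1^2*y.2^2 + x.2^2*y.1^2)
        - (a₁*x.1*y.1 + a₂*(x.1*y.2 + x.2*y.1))^2) * h5
  refine ⟨hmul, fun x => ⟨?_, ?_⟩⟩
  · rintro ⟨y, hy⟩
    have hone : pN a₁ a₂ a₃ b₁ b₂ b₃ (pone a₁ a₂ b₁ b₂) = 1 := by
      simp only [pN, pone, Prod.smul_mk, smul_eq_mul]
      field_simp
      linear_combination (b₁*(a₁ - b₂)) * hp3 + (a₁*b₂) * h5
    have h1 := hmul x y
    rw [hy, hone] at h1
    intro h0
    rw [h0, zero_mul] at h1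
    exact one_ne_zero h1
  · intro hN
    set N := pN a₁ a₂ a₃ b₁ b₂ b₃ x with hNdef
    refine ⟨((b₂*(b₂*x.1 + b₃*x.2) + b₁*(a₂*x.1 + a₃*x.2)) / ((a₁*b₂ - a₂*b₁) * N),
             (-(b₂*(b₁*x.1 + b₂*x.2)) - b₁*(a₁*x.1 + a₂*x.2)) / ((a₁*b₂ - a₂*b₁) * N)), ?_⟩
    have hNx : N = (a₁ * b₂ - a₂ * b₁) * x.1 ^ 2 + (a₁ * b₃ - a₃ * b₁) * x.1 * x.2 -
        (a₁ * a₃ - a₂ ^ 2) * x.2 ^ 2 := rfl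
    apply Prod.ext
    · simp only [pmul, pone, Prod.smul_mk, smul_eq_mul]
      field_simp
      rw [div_left_inj' (by contrapose! hE; linear_combination hE)]
      rw [hNx]
      linear_combination (a₂*b₂*(a₁ - b₂)*x.2^2) * hp3 + (a₂*b₁*b₂*x.2^2 + b₂*x.2^2) * hp4 + (a₂^2*b₂*x.2^2) * h5
    · simp only [pmul, pone, Prod.smul_mk, smul_eq_mul]
      field_simp
      rw [← neg_div, div_left_inj' (by contrapose! hE; linear_combination hE)]
      rw [hNx]
      linear_combination ((a₁ - b₂)*x.2^2) * hp3 + (a₂*x.2^2) * h5
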